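/- In the double interferometer, the sum over all four path histories of sequential weak values equals 1: (E,B)_w + (F,B)_w + (E,C)_w + (F,C)_w = 1, and in particular one of them, (F,B)_w = −1/2, is negative. -/

import Mathlib

open scoped InnerProductSpace

/-- The rank-one projector `|v⟩⟨v|` onto a (unit) vector `v`. -/
noncomputable def proj {H : Type*} [NormedAddCommGroup H] [InnerProductSpace ℂ H]
    (v : H) : H →ₗ[ℂ] H :=
  ((innerSL ℂ v).smulRight v).toLinearMap

/-- the sum over all four path histories of the sequential weak values
equals 1, and (F,B)_w = -1/2 is negative. -/
theorem double_interferometer_sum_over_paths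
    {H : Type*} [NormedAddCommGroup H] [InnerProductSpace ℂ H] [FiniteDimensional ℂ H]
    (vA vB vC vE vF vD vD' : H)
    (horth : Orthonormal ℂ ![vA, vB, vC, vE, vF, vD, vD'])
    (U1 U2 U3 : H →ₗ[ℂ] H)
    (hU1 : U1 ∈ unitary (H →ₗ[ℂ] H)) (hU2 : U2 ∈ unitary (H →ₗ[ℂ] H))
    (hU3 : U3 ∈ unitary (H →ₗ[ℂ] H))
    (h1 : U1 vA = (Real.sqrt 2 : ℂ)⁻¹ • (vB + vC))
    (h2 : U2 vB = (Real.sqrt 2 : ℂ)⁻¹ • (vE + vF))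
    (h3 : U2 vC = (Real.sqrt 2 : ℂ)⁻¹ • (vE - vF))
    (h4 : U3 vE = (Real.sqrt 2 : ℂ)⁻¹ • (-vD + vD'))
    (h5 : U3 vF = (Real.sqrt 2 : ℂ)⁻¹ • (vD + vD'))
    (hD : ⟪vD, U3 (U2 (U1 vA))⟫_ℂ ≠ 0)
    :
    ⟪vD, U3 (proj vE (U2 (proj vB (U1 vA))))⟫_ℂ / ⟪vD, U3 (U2 (U1 vA))⟫_ℂ
      + ⟪vD, U3 (proj vF (U2 (proj vB (U1 vA))))⟫_ℂ / ⟪vD, U3 (U2 (U1 vA))⟫_ℂ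
      + ⟪vD, U3 (proj vE (U2 (proj vC (U1 vA))))⟫_ℂ / ⟪vD, U3 (U2 (U1 vA))⟫_ℂ
      + ⟪vD, U3 (proj vF (U2 (proj vC (U1 vA))))⟫_ℂ / ⟪vD, U3 (U2 (U1 vA))⟫_ℂ = 1
    ∧ ⟪vD, U3 (proj vF (U2 (proj vB (U1 vA))))⟫_ℂ / ⟪vD, U3 (U2 (U1 vA))⟫_ℂ = -(1 / 2) := by
  classical
  have key := orthonormal_iff_ite.mp horth
  have hBB : ⟪vB, vB⟫_ℂ = 1 := by simpa using key 1 1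
  have hBC : ⟪vB, vC⟫_ℂ = 0 := by simpa using key 1 2
  have hCB : ⟪vC, vB⟫_ℂ = 0 := by simpa using key 2 1
  have hCC : ⟪vC, vC⟫_ℂ = 1 := by simpa using key 2 2
  have hEE : ⟪vE, vE⟫_ℂ = 1 := by simpa using key 3 3
  have hEF : ⟪vE, vF⟫_ℂ = 0 := by simpa using key 3 4
  have hFE : ⟪vF, vE⟫_ℂ = 0 := by simpa using key 4 3
  have hFF : ⟪vF, vF⟫_ℂ = 1 := by simpa using key 4 4
  have hDD : ⟪vD, vD⟫_ℂ = 1 := by simpa using key 5 5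
  have hDD' : ⟪vD, vD'⟫_ℂ = 0 := by simpa using key 5 6
  have hc2 : (Real.sqrt 2 : ℂ) * (Real.sqrt 2 : ℂ) = 2 := by
    norm_cast
    exact Real.mul_self_sqrt (by norm_num)
  have hcne : (Real.sqrt 2 : ℂ) ≠ 0 := by
    intro h
    rw [h, zero_mul] at hc2
    norm_num at hc2
  have hnB : ‖vB‖ = 1 := by simpa using horth.1 1
  have hnC : ‖vC‖ = 1 := by simpa using horth.1 2
  have hB1 : ⟪vB, U1 vA⟫_ℂ = (Real.sqrt 2 : ℂ)⁻¹ := by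
    simp [h1, inner_smul_right, inner_add_right, hBB, hBC, hnB]
  have hC1 : ⟪vC, U1 vA⟫_ℂ = (Real.sqrt 2 : ℂ)⁻¹ := by
    simp [h1, inner_smul_right, inner_add_right, hCB, hCC, hnC]
  have hden : ⟪vD, U3 (U2 (U1 vA))⟫_ℂ = -(Real.sqrt 2 : ℂ)⁻¹ := by
    simp only [h1, map_smul, map_add, h2, h3, smul_add, smul_sub, map_sub, h4, h5,
      inner_smul_right, inner_add_right, inner_sub_right, inner_neg_right,
      hDD, hDD']
    field_simp
    ring_nf
    linear_combination hc2
  have hprojB : proj vB (U1 vA) = (Real.sqrt 2 : ℂ)⁻¹ • vB := by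
    simp [proj, h1, inner_smul_right, inner_add_right, hBB, hBC, hnB]
  have hprojC : proj vC (U1 vA) = (Real.sqrt 2 : ℂ)⁻¹ • vC := by
    simp [proj, h1, inner_smul_right, inner_add_right, hCB, hCC, hnC]
  have hEB : ⟪vD, U3 (proj vE (U2 (proj vB (U1 vA))))⟫_ℂ = -((Real.sqrt 2 : ℂ)⁻¹)^3 := by
    simp only [hprojB, map_smul, h2, proj, ContinuousLinearMap.coe_coe,
      LinearMap.coe_toContinuousLinearMap', ContinuousLinearMap.smulRight_apply,
      innerSL_apply_apply, inner_smul_right, inner_add_right, hB1, hEE, hEF, h4,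
      smul_smul, inner_neg_right, hDD, hDD']
    ring
  have hFB : ⟪vD, U3 (proj vF (U2 (proj vB (U1 vA))))⟫_ℂ = ((Real.sqrt 2 : ℂ)⁻¹)^3 := by
    simp only [hprojB, map_smul, h2, proj, ContinuousLinearMap.coe_coe,
      LinearMap.coe_toContinuousLinearMap', ContinuousLinearMap.smulRight_apply,
      innerSL_apply_apply, inner_smul_right, inner_add_right, hB1, hFE, hFF, h5,
      smul_smul, hDD, hDD']
    ring
  have hEC : ⟪vD, U3 (proj vE (U2 (proj vC (U1 vA))))⟫_ℂ = -((Real.sqrt 2 : ℂ)⁻¹)^3 := by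
    simp only [hprojC, map_smul, h3, proj, ContinuousLinearMap.coe_coe,
      LinearMap.coe_toContinuousLinearMap', ContinuousLinearMap.smulRight_apply,
      innerSL_apply_apply, inner_smul_right, inner_sub_right, inner_add_right, hC1, hEE, hEF, h4,
      smul_smul, inner_neg_right, hDD, hDD']
    ring
  have hFC : ⟪vD, U3 (proj vF (U2 (proj vC (U1 vA))))⟫_ℂ = -((Real.sqrt 2 : ℂ)⁻¹)^3 := by
    simp only [hprojC, map_smul, h3, proj, ContinuousLinearMap.coe_coe,
      LinearMap.coe_toContinuousLinearMap', ContinuousLinearMap.smulRight_apply,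
      innerSL_apply_apply, inner_smul_right, inner_sub_right, inner_add_right, hC1, hFE, hFF, h5,
      smul_smul, hDD, hDD']
    ring
  rw [hden, hEB, hFB, hEC, hFC]
  constructor
  · field_simp
    ring_nf
    linear_combination (-1 : ℂ) * hc2
  · field_simp
    ring_nf
    linear_combination hc2
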